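/- Let a, b be positive integers and μ a partition of ab with μ ⊆ (a^(b+1)) (i.e., μ has at most b+1 parts, each at most a). Then there is exactly one semistandard Young tableau of shape (a^b) and content μ. -/

import Mathlib

/-- A partition, written as a weakly decreasing list of positive parts. -/
def IsPartitionL (l : List ℕ) : Prop := l.Pairwise (· ≥ ·) ∧ ∀ x ∈ l, 0 < x

/-- The shape of a tableau (rows listed bottom-to-top, French notation). -/
def shapeOf (t : List (List ℕ)) : List ℕ := t.map List.length

/-- Reading word: concatenate the rows from top to bottom. -/
def readingWord (t : List (List ℕ)) : List ℕ := t.reverse.flatten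

/-- Semistandard Young tableau (rows bottom-to-top): nonempty rows, weakly
increasing rows, positive entries, and strictly increasing columns. -/
def IsSSYT (t : List (List ℕ)) : Prop :=
  ([] ∉ t) ∧
  (∀ r ∈ t, List.Pairwise (· ≤ ·) r) ∧
  (∀ r ∈ t, ∀ x ∈ r, 0 < x) ∧
  List.Chain' (fun low up => up.length ≤ low.length ∧
    ∀ p < up.length, low.getD p 0 < up.getD p 0) t

/-- The tableau has `μ i` copies of the letter `i+1` (and no other letters). -/
def HasContent (t : List (List ℕ)) (μ : List ℕ) : Prop :=
  ∀ i, t.flatten.count (i + 1) = μ.getD i 0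

/-- The statistic n(λ) = Σ (i-1)λᵢ. -/
def nstatL (l : List ℕ) : ℕ := ∑ i ∈ Finset.range l.length, i * l.getD i 0

namespace SSYTAux

/-- `xv k` = number of entries equal to `k+1` in row `k` (0-based) of the unique tableau. -/
def xv (a : ℕ) (μ : List ℕ) (k : ℕ) : ℕ := (μ.take (k+1)).sum - k * a

/-- Row `k` (0-based) of the unique tableau. -/
def Trow (a : ℕ) (μ : List ℕ) (k : ℕ) : List ℕ :=
  List.replicate (xv a μ k) (k+1) ++ List.replicate (a - xv a μ k) (k+2)

/-- The unique tableau. -/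
def Ttab (a b : ℕ) (μ : List ℕ) : List (List ℕ) := (List.range b).map (Trow a μ)

lemma sorted_two (m n c d : ℕ) (h : c ≤ d) :
    (List.replicate m c ++ List.replicate n d).Pairwise (· ≤ ·) := by
  rw [List.pairwise_append]
  refine ⟨List.pairwise_replicate.mpr (Or.inr le_rfl),
         List.pairwise_replicate.mpr (Or.inr le_rfl), ?_⟩
  intro x hx y hy
  simp [List.eq_of_mem_replicate hx, List.eq_of_mem_replicate hy, h]

lemma getD_two (m n c d p : ℕ) (hp : p < m + n) :
    (List.replicate m c ++ List.replicate n d).getD p 0 = if p < m then c else d := by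
  split
  · rename_i h
    rw [List.getD_append _ _ _ _ (by simpa using h),
      List.getD_eq_getElem _ _ (by simpa using h), List.getElem_replicate]
  · rename_i h
    have hlen : p < (List.replicate m c ++ List.replicate n d).length := by simpa using hp
    rw [List.getD_eq_getElem _ _ hlen, List.getElem_append_right (by simpa using h),
      List.getElem_replicate]

lemma count_two (m n c d v : ℕ) :
    (List.replicate m c ++ List.replicate n d).count v =
      (if c = v then m else 0) + (if d = v then n else 0) := by
  simp [List.count_append, List.count_replicate]

lemma mem_two {m n c d y : ℕ} (hy : y ∈ List.replicate m c ++ List.replicate n d) :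
    y = c ∨ y = d := by
  rcases List.mem_append.mp hy with h | h
  · exact Or.inl (List.eq_of_mem_replicate h)
  · exact Or.inr (List.eq_of_mem_replicate h)

/-- Length of a list with values among two given distinct values. -/
lemma length_eq_counts {l : List ℕ} {c d : ℕ} (hcd : c ≠ d)
    (h : ∀ x ∈ l, x = c ∨ x = d) : l.length = l.count c + l.count d := by
  induction l with
  | nil => simp
  | cons a t ih =>
    have ha := h a (by simp)
    have ht : ∀ x ∈ t, x = c ∨ x = d := fun x hx => h x (by simp [hx])
    rcases ha with rfl | rfl <;>
      simp [List.count_cons, ih ht, hcd, hcd.symm] <;> omega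

/-- Sum of a map over a list as a `Finset.range` sum via `getD`. -/
lemma sum_map_eq_range {α : Type*} (d : α) (f : α → ℕ) (l : List α) :
    (l.map f).sum = ∑ i ∈ Finset.range l.length, f (l.getD i d) := by
  induction l with
  | nil => simp
  | cons a t ih =>
    simp only [List.map_cons, List.sum_cons, List.length_cons, Finset.sum_range_succ']
    simp [ih, Nat.add_comm]

lemma Ssucc (μ : List ℕ) (k : ℕ) :
    (μ.take (k+1)).sum = (μ.take k).sum + μ.getD k 0 := by
  by_cases h : k < μ.length
  · rw [List.sum_take_succ _ _ h, List.getD_eq_getElem _ _ h]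
  · push_neg at h
    rw [List.take_of_length_le h, List.take_of_length_le (le_trans h (by omega)),
      List.getD_eq_default _ _ h]
    simp

lemma Sle {a : ℕ} {μ : List ℕ} (hparts : ∀ x ∈ μ, x ≤ a) (k : ℕ) :
    (μ.take k).sum ≤ k * a := by
  induction k with
  | zero => simp
  | succ k ih =>
    have hg : μ.getD k 0 ≤ a := by
      by_cases h : k < μ.length
      · rw [List.getD_eq_getElem _ _ h]; exact hparts _ (List.getElem_mem h)
      · rw [List.getD_eq_default _ _ (by omega)]; omega
    rw [Ssucc]
    have hh : (k+1)*a = k*a + a := by ring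
    omega

lemma Sge {a b : ℕ} {μ : List ℕ} (hsum : μ.sum = a * b) (hlen : μ.length ≤ b + 1)
    (hparts : ∀ x ∈ μ, x ≤ a) {k : ℕ} (hk : k ≤ b) : k * a ≤ (μ.take (k+1)).sum := by
  have hsplit : (μ.take (k+1)).sum + (μ.drop (k+1)).sum = a * b := by
    rw [← hsum, ← List.sum_append, List.take_append_drop]
  have hdl : (μ.drop (k+1)).length ≤ b - k := by
    simp only [List.length_drop]; omega
  have hds : (μ.drop (k+1)).sum ≤ (μ.drop (k+1)).length * a := by
    have := List.sum_le_card_nsmul (μ.drop (k+1)) a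
      (fun x hx => hparts x (List.mem_of_mem_drop hx))
    simpa [smul_eq_mul] using this
  have h2 : (μ.drop (k+1)).length * a ≤ (b - k) * a := Nat.mul_le_mul_right _ hdl
  have h3 : (b-k)*a + k*a = a*b := by
    rw [← Nat.add_mul, Nat.sub_add_cancel hk]; ring
  omega

lemma xv_le {a : ℕ} {μ : List ℕ} (hparts : ∀ x ∈ μ, x ≤ a) (k : ℕ) : xv a μ k ≤ a := by
  have h1 := Sle hparts (k+1)
  have hh : (k+1)*a = k*a + a := by ring
  unfold xv; omega

lemma xv_mono {a b : ℕ} {μ : List ℕ} (hsum : μ.sum = a * b) (hlen : μ.length ≤ b + 1)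
    (hparts : ∀ x ∈ μ, x ≤ a) {k : ℕ} (hk : k + 1 ≤ b) : xv a μ (k+1) ≤ xv a μ k := by
  have h1 := Ssucc μ (k+1)
  have h2 : μ.getD (k+1) 0 ≤ a := by
    by_cases h : k+1 < μ.length
    · rw [List.getD_eq_getElem _ _ h]; exact hparts _ (List.getElem_mem h)
    · rw [List.getD_eq_default _ _ (by omega)]; omega
  have h3 := Sge hsum hlen hparts (show k ≤ b by omega)
  have hh : (k+1)*a = k*a + a := by ring
  unfold xv; omega

lemma Trow_length {a : ℕ} {μ : List ℕ} (hparts : ∀ x ∈ μ, x ≤ a) (k : ℕ) :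
    (Trow a μ k).length = a := by
  have := xv_le hparts k
  simp [Trow]; omega

lemma arith_mid (a p s1 s2 g : ℕ) (e1 : s2 = s1 + g) (e2 : p ≤ s1) (e3 : p + a ≤ s2)
    (e4 : s1 - p ≤ a) : (s2 - (p + a)) + (a - (s1 - p)) = g := by omega

lemma arith_top (a p s1 s2 g : ℕ) (e1 : s2 = s1 + g) (e2 : p ≤ s1) (e4 : s1 ≤ p + a)
    (e5 : s2 = p + a) : a - (s1 - p) = g := by omega

lemma arith_rec (a p s1 s2 g c : ℕ) (e1 : s2 = s1 + g) (e2 : p ≤ s1) (e4 : s1 - p ≤ a)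
    (h : c + (a - (s1 - p)) = g) : c = s2 - (p + a) := by omega

lemma list_range_sum (n : ℕ) (f : ℕ → ℕ) :
    ((List.range n).map f).sum = ∑ i ∈ Finset.range n, f i := by
  induction n with
  | zero => simp
  | succ n ih => rw [List.range_succ, Finset.sum_range_succ]; simp [ih]

end SSYTAux

open SSYTAux in
/-- Let a, b be positive integers and μ a partition of ab with μ ⊆ (a^(b+1)),
i.e. μ has at most b+1 parts, each at most a.  Then there is exactly one
semistandard Young tableau of shape (a^b) and content μ. -/
theorem stmt1 (a b : ℕ) (ha : 0 < a) (hb : 0 < b) (μ : List ℕ)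
    (hμ : IsPartitionL μ) (hsum : μ.sum = a * b)
    (hlen : μ.length ≤ b + 1) (hparts : ∀ x ∈ μ, x ≤ a) :
    ∃! t : List (List ℕ),
      IsSSYT t ∧ shapeOf t = List.replicate b a ∧ HasContent t μ := by
  have hxle := fun k => xv_le hparts (k : ℕ)
  have hxmono := fun {k} hk => xv_mono hsum hlen hparts (k := k) hk
  have hSge := fun {k} hk => Sge hsum hlen hparts (k := k) hk
  have hSle := fun k => Sle hparts (k : ℕ)
  have hSsucc := Ssucc μ
  have hrowlenT := fun k => Trow_length hparts (k : ℕ)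
  refine ⟨Ttab a b μ, ⟨⟨?_, ?_, ?_, ?_⟩, ?_, ?_⟩, ?_⟩
  · -- no empty rows
    intro hmem
    rw [Ttab, List.mem_map] at hmem
    obtain ⟨k, -, hk⟩ := hmem
    have := congrArg List.length hk
    rw [hrowlenT k] at this
    simp at this
    omega
  · -- rows sorted
    intro r hr
    rw [Ttab, List.mem_map] at hr
    obtain ⟨k, -, rfl⟩ := hr
    exact sorted_two _ _ _ _ (by omega)
  · -- entries positive
    intro r hr x hx
    rw [Ttab, List.mem_map] at hr
    obtain ⟨k, -, rfl⟩ := hr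
    rcases mem_two hx with rfl | rfl <;> omega
  · -- columns strictly increasing
    rw [List.Chain', List.isChain_iff_getElem]
    intro i hi
    have hilen : i + 1 < b := by
      have h := hi
      simp only [Ttab, List.length_map, List.length_range] at h
      omega
    have hget : ∀ j (hj : j < b), (Ttab a b μ)[j]'(by simpa [Ttab] using hj) = Trow a μ j := by
      intro j hj
      simp [Ttab]
    rw [hget i (by omega), hget (i+1) hilen]
    refine ⟨by rw [hrowlenT, hrowlenT], ?_⟩
    intro p hp
    rw [hrowlenT] at hp
    have h1 : xv a μ i + (a - xv a μ i) = a := by have := hxle i; omega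
    have h2 : xv a μ (i+1) + (a - xv a μ (i+1)) = a := by have := hxle (i+1); omega
    rw [Trow, Trow, getD_two _ _ _ _ _ (by omega), getD_two _ _ _ _ _ (by omega)]
    have hm : xv a μ (i+1) ≤ xv a μ i := hxmono (by omega)
    split <;> split <;> omega
  · -- shape
    rw [shapeOf, Ttab, List.map_map, List.eq_replicate_iff]
    constructor
    · simp
    · intro x hx
      rw [List.mem_map] at hx
      obtain ⟨k, -, rfl⟩ := hx
      exact hrowlenT k
  · -- content
    intro i
    rw [List.count_flatten, Ttab, List.map_map, list_range_sum]
    have hterm : ∀ k, (List.count (i+1) ∘ Trow a μ) k =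
        (if k = i then xv a μ k else 0) + (if k + 1 = i then a - xv a μ k else 0) := by
      intro k
      simp only [Function.comp_apply, Trow, count_two]
      congr 1 <;> [skip; skip] <;>
      · split <;> split <;> first | rfl | omega
    simp only [hterm]
    rw [Finset.sum_add_distrib]
    have h1 : (∑ k ∈ Finset.range b, if k = i then xv a μ k else 0)
        = if i ∈ Finset.range b then xv a μ i else 0 := Finset.sum_ite_eq' _ _ _
    rw [h1]
    rcases i with _ | j
    · -- i = 0
      have h2 : (∑ k ∈ Finset.range b, if k + 1 = 0 then a - xv a μ k else 0) = 0 := by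
        apply Finset.sum_eq_zero; intro k _; simp
      rw [h2]
      simp only [Finset.mem_range]
      rw [if_pos hb]
      have := hSsucc 0
      simp only [List.take_zero, List.sum_nil] at this
      unfold xv; omega
    · have h2 : (∑ k ∈ Finset.range b, if k + 1 = j + 1 then a - xv a μ k else 0)
          = if j ∈ Finset.range b then a - xv a μ j else 0 := by
        rw [← Finset.sum_ite_eq' (Finset.range b) j (fun k => a - xv a μ k)]
        apply Finset.sum_congr rfl
        intro k _
        split <;> split <;> first | rfl | omega
      rw [h2]
      simp only [Finset.mem_range]
      by_cases hjb : j + 1 < b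
      · rw [if_pos hjb, if_pos (by omega)]
        have hh : (j+1)*a = j*a + a := by ring
        have e3 : j*a + a ≤ (μ.take (j+2)).sum := by
          rw [← hh]; exact hSge (show j + 1 ≤ b by omega)
        have key := arith_mid a (j*a) ((μ.take (j+1)).sum) ((μ.take (j+2)).sum)
          (μ.getD (j+1) 0) (hSsucc (j+1)) (hSge (show j ≤ b by omega)) e3 (hxle j)
        show (μ.take (j+2)).sum - (j+1)*a + (a - ((μ.take (j+1)).sum - j*a)) = μ.getD (j+1) 0
        rw [hh]
        exact key
      · by_cases hjb2 : j + 1 = b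
        · rw [if_neg (by omega), if_pos (by omega)]
          have e2 : (μ.take (j+2)).sum = a * b := by
            rw [List.take_of_length_le (by omega), hsum]
          have e4 : (μ.take (j+1)).sum ≤ j*a + a := by
            have := hSle (j+1)
            have hh : (j+1)*a = j*a + a := by ring
            omega
          have e5 : (μ.take (j+2)).sum = j*a + a := by
            rw [e2, ← hjb2]; ring
          have key := arith_top a (j*a) ((μ.take (j+1)).sum) ((μ.take (j+2)).sum)
            (μ.getD (j+1) 0) (hSsucc (j+1)) (hSge (show j ≤ b by omega)) e4 e5
          show 0 + (a - ((μ.take (j+1)).sum - j*a)) = μ.getD (j+1) 0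
          rw [Nat.zero_add]
          exact key
        · rw [if_neg (by omega), if_neg (by omega)]
          rw [List.getD_eq_default _ _ (by omega)]
  · -- uniqueness
    rintro t ⟨⟨hne, hsort, hpos, hchain⟩, hshape, hcont⟩
    have hlenb : t.length = b := by
      have h := congrArg List.length hshape
      simpa [shapeOf] using h
    have hrowlen : ∀ k, k < b → (t.getD k []).length = a := by
      intro k hk
      have hk' : k < t.length := by omega
      have h1 := congrArg (fun l => l.getD k 0) hshape
      simp only [shapeOf] at h1
      rw [List.getD_eq_getElem _ _ (by simpa using hk'), List.getElem_map,
        List.getD_eq_getElem _ _ (by simpa using hk), List.getElem_replicate] at h1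
      rw [List.getD_eq_getElem _ _ hk']
      exact h1
    have hmem_t : ∀ k, k < b → t.getD k [] ∈ t := by
      intro k hk
      rw [List.getD_eq_getElem _ _ (by omega)]
      exact List.getElem_mem _
    have hstep : ∀ k, k + 1 < b → ∀ p, p < a →
        (t.getD k []).getD p 0 < (t.getD (k+1) []).getD p 0 := by
      intro k hk p hp
      rw [List.Chain', List.isChain_iff_getElem] at hchain
      obtain ⟨-, h2⟩ := hchain k (by omega)
      have e1 : t[k]'(by omega) = t.getD k [] := by
        rw [List.getD_eq_getElem _ _ (by omega)]
      have e2 : t[k+1]'(by omega) = t.getD (k+1) [] := by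
        rw [List.getD_eq_getElem _ _ (by omega)]
      rw [e1, e2] at h2
      exact h2 p (by rw [hrowlen (k+1) hk]; exact hp)
    have hlb : ∀ k, k < b → ∀ p, p < a → k + 1 ≤ (t.getD k []).getD p 0 := by
      intro k
      induction k with
      | zero =>
        intro hk p hp
        have hplen : p < (t.getD 0 []).length := by rw [hrowlen 0 hk]; exact hp
        have hmem : (t.getD 0 []).getD p 0 ∈ t.getD 0 [] := by
          rw [List.getD_eq_getElem (t.getD 0 []) 0 hplen]
          exact List.getElem_mem _
        exact hpos _ (hmem_t 0 hk) _ hmem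
      | succ k ih =>
        intro hk p hp
        have h1 := hstep k hk p hp
        have h2 := ih (by omega) p hp
        omega
    have habsent : ∀ v, b + 1 < v → v ∉ t.flatten := by
      intro v hv hmem
      have h0 : v = (v-1) + 1 := by omega
      have h := hcont (v-1)
      rw [← h0, List.getD_eq_default _ _ (by omega)] at h
      exact (List.count_eq_zero.mp h) hmem
    have hEntryMem : ∀ k, k < b → ∀ p, p < a → (t.getD k []).getD p 0 ∈ t.flatten := by
      intro k hk p hp
      rw [List.mem_flatten]
      refine ⟨t.getD k [], hmem_t k hk, ?_⟩
      have hplen : p < (t.getD k []).length := by rw [hrowlen k hk]; exact hp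
      rw [List.getD_eq_getElem (t.getD k []) 0 hplen]
      exact List.getElem_mem _
    have hub : ∀ d k, k + d + 1 = b → ∀ p, p < a → (t.getD k []).getD p 0 ≤ k + 2 := by
      intro d
      induction d with
      | zero =>
        intro k hkb p hp
        by_contra hgt
        push_neg at hgt
        exact habsent _ (by omega) (hEntryMem k (by omega) p hp)
      | succ d ih =>
        intro k hkb p hp
        have h1 := hstep k (by omega) p hp
        have h2 := ih (k+1) (by omega) p hp
        omega
    have hubk : ∀ k, k < b → ∀ p, p < a → (t.getD k []).getD p 0 ≤ k + 2 := by
      intro k hk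
      exact hub (b - 1 - k) k (by omega)
    have hmemrow : ∀ k, k < b → ∀ y ∈ t.getD k [], y = k+1 ∨ y = k+2 := by
      intro k hk y hy
      obtain ⟨p, hp, rfl⟩ := List.mem_iff_getElem.mp hy
      have hpa : p < a := by rw [← hrowlen k hk]; exact hp
      have e : (t.getD k [])[p] = (t.getD k []).getD p 0 := (List.getD_eq_getElem _ _ hp).symm
      rw [e]
      have h1 := hlb k hk p hpa
      have h2 := hubk k hk p hpa
      omega
    have hflat : ∀ v, t.flatten.count v = ∑ k ∈ Finset.range b, (t.getD k []).count v := by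
      intro v
      rw [List.count_flatten, sum_map_eq_range ([] : List ℕ), hlenb]
    have hcnt0 : ∀ k, k < b → ∀ v, v ≠ k+1 → v ≠ k+2 → (t.getD k []).count v = 0 := by
      intro k hk v h1 h2
      rw [List.count_eq_zero]
      intro hmem
      rcases hmemrow k hk v hmem with rfl | rfl
      · exact h1 rfl
      · exact h2 rfl
    have hcount : ∀ k, k < b → (t.getD k []).count (k+1) = xv a μ k := by
      intro k
      induction k with
      | zero =>
        intro hk
        show (t.getD 0 []).count 1 = xv a μ 0
        have h := hcont 0
        rw [hflat 1] at h
        have hterm : ∀ j ∈ Finset.range b, (t.getD j []).count 1 =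
            if j = 0 then (t.getD j []).count 1 else 0 := by
          intro j hj
          rw [Finset.mem_range] at hj
          split
          · rfl
          · rename_i hne0
            exact hcnt0 j hj 1 (by omega) (by omega)
        rw [Finset.sum_congr rfl hterm, Finset.sum_ite_eq' _ 0,
          if_pos (Finset.mem_range.mpr hb)] at h
        have e : (μ.take 1).sum = μ.getD 0 0 := by simpa using hSsucc 0
        have exv : xv a μ 0 = μ.getD 0 0 := by
          show (μ.take 1).sum - 0 * a = μ.getD 0 0
          rw [Nat.zero_mul, Nat.sub_zero]; exact e
        rw [exv]
        exact h
      | succ m ih =>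
        intro hk
        have hmb : m < b := by omega
        have ihm := ih hmb
        have hlen2 : (t.getD m []).length = a := hrowlen m hmb
        have hc2 : (t.getD m []).count (m+2) = a - xv a μ m := by
          have h1 := length_eq_counts (show m+1 ≠ m+2 by omega) (hmemrow m hmb)
          have hx := hxle m
          omega
        have h := hcont (m+1)
        rw [hflat (m+2)] at h
        have hterm : ∀ j ∈ Finset.range b, (t.getD j []).count (m+2) =
            (if j = m+1 then (t.getD j []).count (m+2) else 0) +
            (if j = m then (t.getD j []).count (m+2) else 0) := by
          intro j hj
          rw [Finset.mem_range] at hj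
          by_cases h1 : j = m+1
          · subst h1; rw [if_pos rfl, if_neg (by omega)]; omega
          · by_cases h2 : j = m
            · subst h2; rw [if_neg (by omega), if_pos rfl]; omega
            · rw [if_neg h1, if_neg h2, hcnt0 j hj (m+2) (by omega) (by omega)]
        rw [Finset.sum_congr rfl hterm, Finset.sum_add_distrib,
          Finset.sum_ite_eq' _ (m+1), Finset.sum_ite_eq' _ m,
          if_pos (Finset.mem_range.mpr hk), if_pos (Finset.mem_range.mpr hmb), hc2] at h
        have hh : (m+1)*a = m*a + a := by ring
        have key := arith_rec a (m*a) ((μ.take (m+1)).sum) ((μ.take (m+2)).sum)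
          (μ.getD (m+1) 0) ((t.getD (m+1) []).count (m+2))
          (hSsucc (m+1)) (hSge (show m ≤ b by omega)) (hxle m) h
        show _ = (μ.take (m+2)).sum - (m+1) * a
        rw [hh]
        exact key
    have hTlen : (Ttab a b μ).length = b := by simp [Ttab]
    apply List.ext_getElem (by omega)
    intro k h1 h2
    have hkb : k < b := by omega
    have hgetT : (Ttab a b μ)[k]'h2 = Trow a μ k := by simp [Ttab]
    have hgetk : t[k]'h1 = t.getD k [] := (List.getD_eq_getElem _ _ h1).symm
    rw [hgetT, hgetk]
    refine (fun hp h1 h2 => List.Perm.eq_of_pairwise' (r := (· ≤ ·)) h1 h2 hp) ?_ ?_ ?_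
    · rw [List.perm_iff_count]
      intro v
      rw [Trow, count_two]
      by_cases hv1 : v = k+1
      · subst hv1
        rw [if_pos rfl, if_neg (by omega), hcount k hkb]
        exact (Nat.add_zero _).symm
      · by_cases hv2 : v = k+2
        · subst hv2
          rw [if_neg (by omega), if_pos rfl]
          have h3 := length_eq_counts (show (k:ℕ)+1 ≠ k+2 by omega) (hmemrow k hkb)
          rw [hrowlen k hkb, hcount k hkb] at h3
          have hx := hxle k
          omega
        · rw [if_neg (fun hh => hv1 hh.symm), if_neg (fun hh => hv2 hh.symm),
            hcnt0 k hkb v hv1 hv2]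
    · exact hsort _ (hmem_t k hkb)
    · exact sorted_two _ _ _ _ (by omega)
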